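/- Let f : ℝ^m → ℝ be differentiable at x̄ and suppose x̄ is a local minimizer of φ(x) = f(x) + β‖Cx‖₁. Then there exists ξ ∈ ℝ^n with |ξᵢ| ≤ 1 for all i, ξᵢ = sign(⟨c_i, x̄⟩) whenever ⟨c_i, x̄⟩ ≠ 0, and ∇f(x̄) + β Cᵀξ = 0. -/

import Mathlib

lemma aux_abs_add (a c : ℝ) (ha : a ≠ 0) (h : |c| ≤ |a|) :
    |a + c| = |a| + Real.sign a * c := by
  rcases ha.lt_or_gt with h1|h1
  · rw [abs_of_neg h1] at h
    rw [Real.sign_of_neg h1, abs_of_neg h1,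
      abs_of_nonpos (by linarith [(abs_le.1 h).2])]
    ring
  · rw [abs_of_pos h1] at h
    rw [Real.sign_of_pos h1, abs_of_pos h1,
      abs_of_nonneg (by linarith [(abs_le.1 h).1])]
    ring

lemma key_dir (m n : ℕ) (C : Matrix (Fin n) (Fin m) ℝ) (β : ℝ)
    (f : EuclideanSpace ℝ (Fin m) → ℝ) (xbar g : EuclideanSpace ℝ (Fin m))
    (hf : HasGradientAt f g xbar)
    (hmin : IsLocalMin (fun x : EuclideanSpace ℝ (Fin m) =>
      f x + β * ∑ i, |∑ j, C i j * x j|) xbar)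
    (d : EuclideanSpace ℝ (Fin m)) :
    0 ≤ (∑ j, g j * d j) + β * ∑ i, (if (∑ j, C i j * xbar j) = 0
        then |∑ j, C i j * d j| else Real.sign (∑ j, C i j * xbar j) * (∑ j, C i j * d j)) := by
  classical
  set a : Fin n → ℝ := fun i => ∑ j, C i j * xbar j with ha
  set b : Fin n → ℝ := fun i => ∑ j, C i j * d j with hb
  set S : ℝ := ∑ i, (if a i = 0 then |b i| else Real.sign (a i) * b i) with hS
  set L : ℝ := ∑ j, g j * d j with hL
  set ψ : ℝ → ℝ := fun t => f (xbar + t • d) + β * ∑ i, |∑ j, C i j * ((xbar + t • d) j)|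
    with hψ
  set h : ℝ → ℝ := fun t => f (xbar + t • d) + (β * ∑ i, |a i| + t * (β * S)) with hh
  -- pointwise expansion
  have hexp : ∀ (t : ℝ) (i : Fin n), (∑ j, C i j * ((xbar + t • d) j)) = a i + t * b i := by
    intro t i
    simp only [PiLp.add_apply, PiLp.smul_apply, smul_eq_mul, mul_add, Finset.sum_add_distrib,
      ha, hb, Finset.mul_sum]
    congr 1
    exact Finset.sum_congr rfl fun j _ => by ring
  -- derivative of h at 0
  have hline : HasDerivAt (fun t : ℝ => xbar + t • d) d 0 := by
    simpa using ((hasDerivAt_id (0 : ℝ)).smul_const d).const_add xbar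
  have hF : HasFDerivAt f ((InnerProductSpace.toDual ℝ _) g) xbar := hf.hasFDerivAt
  have hcomp : HasDerivAt (fun t : ℝ => f (xbar + t • d)) L 0 := by
    have hF' : HasFDerivAt f ((InnerProductSpace.toDual ℝ _) g) (xbar + (0:ℝ) • d) := by
      simpa using hF
    have := hF'.comp_hasDerivAt (x := (0 : ℝ)) hline
    have heval : (InnerProductSpace.toDual ℝ (EuclideanSpace ℝ (Fin m))) g d = L := by
      simp [InnerProductSpace.toDual_apply_apply, PiLp.inner_apply, RCLike.inner_apply,
        conj_trivial, hL, mul_comm]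
    rw [← heval]; exact this
  have hder : HasDerivAt h (L + β * S) 0 := by
    have h2 : HasDerivAt (fun t : ℝ => β * ∑ i, |a i| + t * (β * S)) (β * S) 0 :=
      (hasDerivAt_mul_const (β * S)).const_add _
    exact hcomp.add h2
  -- smallness eventually
  have hsmall : ∀ᶠ t in nhdsWithin (0:ℝ) (Set.Ioi 0), ∀ i, a i ≠ 0 → |t * b i| ≤ |a i| := by
    rw [Filter.eventually_all]
    intro i
    by_cases hai : a i = 0
    · filter_upwards with t ht; exact absurd hai ht
    · have h1 : Filter.Tendsto (fun t : ℝ => |t * b i|) (nhds 0) (nhds 0) := by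
        have : Filter.Tendsto (fun t : ℝ => t * b i) (nhds 0) (nhds (0 * b i)) :=
          (continuous_id.mul continuous_const).tendsto 0
        simpa using this.abs
      have h2 := h1.eventually (eventually_le_nhds (abs_pos.2 hai))
      exact (h2.filter_mono nhdsWithin_le_nhds).mono fun t ht _ => ht
  -- eventual equality of ψ and h on the right
  have heq : ∀ᶠ t in nhdsWithin (0:ℝ) (Set.Ioi 0), ψ t = h t := by
    filter_upwards [hsmall, self_mem_nhdsWithin] with t hts (htpos : 0 < t)
    have : (∑ i, |∑ j, C i j * ((xbar + t • d) j)|)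
        = ∑ i, (|a i| + t * (if a i = 0 then |b i| else Real.sign (a i) * b i)) := by
      refine Finset.sum_congr rfl fun i _ => ?_
      rw [hexp t i]
      by_cases hai : a i = 0
      · simp [hai, abs_mul, abs_of_pos htpos]
      · rw [aux_abs_add (a i) (t * b i) hai (hts i hai), if_neg hai]; ring
    simp only [hψ, hh, this, Finset.sum_add_distrib, ← Finset.mul_sum, hS]
    ring
  have hψ0 : ψ 0 = h 0 := by
    simp [hψ, hh, hexp 0, ha]
  -- tendsto of slope of ψ
  have hslope : Filter.Tendsto (slope ψ 0) (nhdsWithin (0:ℝ) (Set.Ioi 0)) (nhds (L + β * S)) := by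
    have h1 := hasDerivAt_iff_tendsto_slope.1 hder
    have h2 := h1.mono_left (nhdsWithin_mono 0 (fun t (ht : t ∈ Set.Ioi 0) => ne_of_gt ht))
    refine h2.congr' ?_
    filter_upwards [heq] with t ht
    simp [slope_def_field, ht, hψ0]
  -- nonnegativity of slope near 0+
  have hnn : ∀ᶠ t in nhdsWithin (0:ℝ) (Set.Ioi 0), 0 ≤ slope ψ 0 t := by
    have hcont : Filter.Tendsto (fun t : ℝ => xbar + t • d) (nhds 0) (nhds xbar) := by
      have : Continuous (fun t : ℝ => xbar + t • d) :=
        continuous_const.add (continuous_id.smul continuous_const)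
      simpa using this.tendsto 0
    have hev : ∀ᶠ t in nhds (0:ℝ), ψ 0 ≤ ψ t := by
      have := hcont.eventually hmin
      filter_upwards [this] with t ht
      simpa [hψ] using ht
    filter_upwards [hev.filter_mono nhdsWithin_le_nhds, self_mem_nhdsWithin]
      with t ht (htpos : 0 < t)
    rw [slope_def_field]
    rw [sub_zero]
    exact div_nonneg (sub_nonneg.2 ht) htpos.le
  exact ge_of_tendsto hslope hnn

lemma aux_sign_mul_self (x : ℝ) : Real.sign x * x = |x| := by
  rcases lt_trichotomy x 0 with h|h|h
  · rw [Real.sign_of_neg h, abs_of_neg h]; ring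
  · simp [h]
  · rw [Real.sign_of_pos h, abs_of_pos h]; ring

lemma aux_abs_sign_le_one (x : ℝ) : |Real.sign x| ≤ 1 := by
  rcases lt_trichotomy x 0 with h|h|h <;>
    simp [Real.sign_of_neg, Real.sign_of_pos, h]

theorem stmt_1 (m n : ℕ) (C : Matrix (Fin n) (Fin m) ℝ) (β : ℝ) (hβ : 0 < β)
    (f : EuclideanSpace ℝ (Fin m) → ℝ) (xbar g : EuclideanSpace ℝ (Fin m))
    (hf : HasGradientAt f g xbar)
    (hmin : IsLocalMin (fun x : EuclideanSpace ℝ (Fin m) =>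
      f x + β * ∑ i, |∑ j, C i j * x j|) xbar) :
    ∃ ξ : Fin n → ℝ, (∀ i, |ξ i| ≤ 1) ∧
      (∀ i, (∑ j, C i j * xbar j) ≠ 0 → ξ i = Real.sign (∑ j, C i j * xbar j)) ∧
      (∀ j, g j + β * ∑ i, C i j * ξ i = 0) := by
  classical
  set a : Fin n → ℝ := fun i => ∑ j, C i j * xbar j with ha
  set sb : Fin n → ℝ := fun i => if a i = 0 then 0 else Real.sign (a i) with hsb
  set T : (Fin n → ℝ) →ₗ[ℝ] EuclideanSpace ℝ (Fin m) :=
    { toFun := fun η => WithLp.toLp 2 (fun jj => ∑ i, C i jj * η i : Fin m → ℝ)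
      map_add' := by
        intro x y; ext jj
        simp [mul_add, Finset.sum_add_distrib]
      map_smul' := by
        intro c x; ext jj
        simp [Finset.mul_sum, smul_eq_mul, mul_left_comm] } with hT
  set box : Set (Fin n → ℝ) :=
    Set.pi Set.univ (fun i => if a i = 0 then Set.Icc (-1:ℝ) 1 else {0}) with hbox
  have hboxconv : Convex ℝ box := convex_pi fun i _ => by
    split
    · exact convex_Icc _ _
    · exact convex_singleton _
  have hboxcomp : IsCompact box := isCompact_univ_pi fun i => by
    split
    · exact isCompact_Icc
    · exact isCompact_singleton
  set K : Set (EuclideanSpace ℝ (Fin m)) := T '' box with hK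
  have hKconv : Convex ℝ K := hboxconv.linear_image T
  have hKclosed : IsClosed K :=
    (hboxcomp.image T.continuous_of_finiteDimensional).isClosed
  set u : EuclideanSpace ℝ (Fin m) :=
    WithLp.toLp 2 (fun j => -(g j + β * ∑ i, C i j * sb i) / β : Fin m → ℝ) with hu
  have huj : ∀ j, u j = -(g j + β * ∑ i, C i j * sb i) / β := fun j => rfl
  have huK : u ∈ K := by
    by_contra huK
    obtain ⟨φf, c, hlt, hgt⟩ := geometric_hahn_banach_closed_point hKconv hKclosed huK
    set w : EuclideanSpace ℝ (Fin m) := (InnerProductSpace.toDual ℝ _).symm φf with hw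
    have hφf : ∀ x : EuclideanSpace ℝ (Fin m), φf x = ∑ j, w j * x j := by
      intro x
      have h0 : (inner ℝ w x : ℝ) = φf x := InnerProductSpace.toDual_symm_apply
      rw [← h0, PiLp.inner_apply]
      simp [RCLike.inner_apply, conj_trivial, mul_comm]
    set b' : Fin n → ℝ := fun i => ∑ j, C i j * w j with hb'
    have hφT : ∀ η : Fin n → ℝ, φf (T η) = ∑ i, η i * b' i := by
      intro η
      rw [hφf]
      have hTa : ∀ jj, (T η) jj = ∑ i, C i jj * η i := fun jj => rfl
      simp only [hTa, Finset.mul_sum, hb']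
      rw [Finset.sum_comm]
      exact Finset.sum_congr rfl fun i _ => Finset.sum_congr rfl fun j _ => by ring
    set ηs : Fin n → ℝ := fun i => if a i = 0 then Real.sign (b' i) else 0 with hηs
    have hηsbox : ηs ∈ box := by
      intro i _
      by_cases hai : a i = 0
      · simp only [hηs, hai, if_true, Set.mem_Icc]
        exact abs_le.1 (aux_abs_sign_le_one _)
      · simp [hηs, hai]
    set P : ℝ := ∑ j, g j * w j with hP
    set Q : ℝ := ∑ i, sb i * b' i with hQ
    set R : ℝ := ∑ i, (if a i = 0 then |b' i| else 0) with hR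
    have hval : φf (T ηs) = R := by
      rw [hφT, hR]
      refine Finset.sum_congr rfl fun i _ => ?_
      by_cases hai : a i = 0
      · simp [hηs, hai, aux_sign_mul_self]
      · simp [hηs, hai]
    have hkey := key_dir m n C β f xbar g hf hmin w
    have hkey' : 0 ≤ P + β * (Q + R) := by
      have hsum : (∑ i, (if (∑ j, C i j * xbar j) = 0 then |∑ j, C i j * w j| else
          Real.sign (∑ j, C i j * xbar j) * (∑ j, C i j * w j))) = Q + R := by
        rw [hQ, hR, ← Finset.sum_add_distrib]
        refine Finset.sum_congr rfl fun i _ => ?_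
        rw [show (∑ j, C i j * xbar j) = a i from rfl, show (∑ j, C i j * w j) = b' i from rfl]
        by_cases hai : a i = 0
        · simp [hsb, hai]
        · simp [hsb, hai]
      rw [hP, ← hsum]
      exact hkey
    have hswap : ∑ j, ∑ i, w j * (C i j * sb i) = Q := by
      rw [Finset.sum_comm, hQ]
      refine Finset.sum_congr rfl fun i _ => ?_
      simp only [hb', Finset.mul_sum]
      exact Finset.sum_congr rfl fun j _ => by ring
    have hφu : φf u = (-P - β * Q) / β := by
      rw [hφf, eq_div_iff hβ.ne']
      calc (∑ j, w j * u j) * β = ∑ j, w j * u j * β := by rw [Finset.sum_mul]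
        _ = ∑ j, (-(g j * w j) - β * ∑ i, w j * (C i j * sb i)) := by
            refine Finset.sum_congr rfl fun j _ => ?_
            rw [huj j, ← Finset.mul_sum]
            field_simp
            ring
        _ = -P - β * Q := by
            rw [Finset.sum_sub_distrib, ← Finset.mul_sum, hswap, ← Finset.sum_neg_distrib]
    have h1 : R < c := by rw [← hval]; exact hlt _ ⟨ηs, hηsbox, rfl⟩
    have h2 : c < (-P - β * Q) / β := by rw [← hφu]; exact hgt
    have h3 : R < (-P - β * Q) / β := h1.trans h2
    rw [lt_div_iff₀ hβ] at h3
    nlinarith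
  obtain ⟨η, hηbox, hTη⟩ := huK
  have hηbox' : ∀ i, η i ∈ (if a i = 0 then Set.Icc (-1:ℝ) 1 else {0}) := fun i =>
    hηbox i (Set.mem_univ i)
  refine ⟨fun i => if a i = 0 then η i else Real.sign (a i), fun i => ?_, fun i hai => ?_,
    fun j => ?_⟩
  · show |if a i = 0 then η i else Real.sign (a i)| ≤ 1
    by_cases hai : a i = 0
    · have h := hηbox' i
      rw [if_pos hai] at h ⊢
      exact abs_le.2 ⟨h.1, h.2⟩
    · rw [if_neg hai]
      exact aux_abs_sign_le_one _
  · show (if a i = 0 then η i else Real.sign (a i)) = Real.sign (∑ j, C i j * xbar j)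
    rw [if_neg hai]
  · show g j + β * ∑ i, C i j * (if a i = 0 then η i else Real.sign (a i)) = 0
    have hcomp : ∀ i, (if a i = 0 then η i else Real.sign (a i)) = sb i + η i := by
      intro i
      by_cases hai : a i = 0
      · simp [hsb, hai]
      · have h0 : η i = 0 := by
          have h := hηbox' i
          rw [if_neg hai] at h
          simpa using h
        simp [hsb, hai, h0]
    have hTj : (∑ i, C i j * η i) = u j := congrFun (congrArg (fun v : EuclideanSpace ℝ (Fin m) => (v : Fin m → ℝ)) hTη) j
    have : ∑ i, C i j * (if a i = 0 then η i else Real.sign (a i))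
        = (∑ i, C i j * sb i) + ∑ i, C i j * η i := by
      rw [← Finset.sum_add_distrib]
      exact Finset.sum_congr rfl fun i _ => by rw [hcomp i]; ring
    rw [this, hTj, huj j]
    field_simp
    ring
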